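/- arXiv:2410.10924 — 2 statements merged into one kernel-verified Lean document; each statement's English description precedes it below -/
import Mathlib

section
/- For any joint distribution p(x,y) with marginals p(x), p(y), any measurable critic function f(x,y), and any positive function a(y), the quantity 1 + E_{p(x,y)}[log(e^{f(x,y)}/a(y))] - E_{p(x)p(y)}[e^{f(x,y)}/a(y)] is a lower bound on the mutual information I(X;Y). -/
open Finset

noncomputable def H2 (b : ℝ) : ℝ := -b * Real.logb 2 b - (1 - b) * Real.logb 2 (1 - b)

noncomputable def entropy {α : Type*} [Fintype α] (p : α → ℝ) : ℝ :=
  -∑ x, p x * Real.logb 2 (p x)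

noncomputable def mutualInfo {α β : Type*} [Fintype α] [Fintype β] (p : α × β → ℝ) : ℝ :=
  ∑ z : α × β, p z * Real.logb 2 (p z / ((∑ y, p (z.1, y)) * (∑ x, p (x, z.2))))

noncomputable def mutualInfoNat {α β : Type*} [Fintype α] [Fintype β] (p : α × β → ℝ) : ℝ :=
  ∑ z : α × β, p z * Real.log (p z / ((∑ y, p (z.1, y)) * (∑ x, p (x, z.2))))

def IsPmf {α : Type*} [Fintype α] (p : α → ℝ) : Prop := (∀ x, 0 ≤ p x) ∧ ∑ x, p x = 1

/-- General variational lower bound with positive function a(y):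
1 + E_p[log(e^f / a)] - E_{pX·pY}[e^f / a] ≤ I(X;Y) (in nats). -/
theorem variational_lower_bound {α β : Type*} [Fintype α] [Fintype β]
    (p : α × β → ℝ) (hp : IsPmf p) (f : α × β → ℝ) (a : β → ℝ) (ha : ∀ y, 0 < a y) :
    1 + (∑ z : α × β, p z * Real.log (Real.exp (f z) / a z.2))
      - ∑ z : α × β, (∑ y, p (z.1, y)) * (∑ x, p (x, z.2)) * (Real.exp (f z) / a z.2)
      ≤ mutualInfoNat p := by
  obtain ⟨hp0, hp1⟩ := hp
  have key : ∀ z : α × β,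
      p z * Real.log (Real.exp (f z) / a z.2) ≤
        p z * Real.log (p z / ((∑ y, p (z.1, y)) * (∑ x, p (x, z.2))))
          + (∑ y, p (z.1, y)) * (∑ x, p (x, z.2)) * (Real.exp (f z) / a z.2) - p z := by
    intro z
    set q : ℝ := (∑ y, p (z.1, y)) * (∑ x, p (x, z.2)) with hqdef
    set g : ℝ := Real.exp (f z) / a z.2 with hgdef
    have hg : 0 < g := div_pos (Real.exp_pos _) (ha _)
    have hq0 : 0 ≤ q := mul_nonneg
      (Finset.sum_nonneg fun i _ => hp0 _) (Finset.sum_nonneg fun i _ => hp0 _)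
    rcases eq_or_lt_of_le (hp0 z) with h | h
    · have : 0 ≤ q * g := mul_nonneg hq0 hg.le
      simp [← h]
      linarith
    · have h1 : p z ≤ ∑ y, p (z.1, y) :=
        Finset.single_le_sum (f := fun y => p (z.1, y)) (fun i _ => hp0 _) (Finset.mem_univ z.2)
      have h2 : p z ≤ ∑ x, p (x, z.2) :=
        Finset.single_le_sum (f := fun x => p (x, z.2)) (fun i _ => hp0 _) (Finset.mem_univ z.1)
      have hq : 0 < q := mul_pos (lt_of_lt_of_le h h1) (lt_of_lt_of_le h h2)
      have hlog : Real.log (g * q / p z) ≤ g * q / p z - 1 :=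
        Real.log_le_sub_one_of_pos (by positivity)
      have hleq : Real.log g - Real.log (p z / q) = Real.log (g * q / p z) := by
        rw [Real.log_div (by positivity) (ne_of_gt h), Real.log_mul (ne_of_gt hg) (ne_of_gt hq),
          Real.log_div (ne_of_gt h) (ne_of_gt hq)]
        ring
      have hmul := mul_le_mul_of_nonneg_left hlog h.le
      have heq : p z * (g * q / p z - 1) = q * g - p z := by
        field_simp
      rw [heq] at hmul
      have : p z * Real.log g - p z * Real.log (p z / q) ≤ q * g - p z := by
        calc p z * Real.log g - p z * Real.log (p z / q)
            = p z * (Real.log g - Real.log (p z / q)) := by ring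
          _ = p z * Real.log (g * q / p z) := by rw [hleq]
          _ ≤ q * g - p z := hmul
      linarith
  have hsum := Finset.sum_le_sum (s := Finset.univ) (fun z _ => key z)
  simp only [Finset.sum_sub_distrib, Finset.sum_add_distrib, hp1] at hsum
  unfold mutualInfoNat
  linarith
end

section
/- (NWJ bound) For any measurable function f with E_{p(x)p(y)}[e^{f(x,y)}] < ∞, I(X;Y) ≥ E_{p(x,y)}[f(x,y)] - e^{-1}·E_{p(x)p(y)}[e^{f(x,y)}]. -/
open Finset

lemma nwj_pointwise (a b t : ℝ) (ha : 0 ≤ a) (hb : 0 ≤ b) (hab : 0 < a → 0 < b) :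
    a * t - Real.exp (-1) * (b * Real.exp t) ≤ a * Real.log (a / b) := by
  rcases eq_or_lt_of_le ha with h | h
  · have : (0:ℝ) ≤ Real.exp (-1) * (b * Real.exp t) := by positivity
    simp [← h]; linarith
  · have hb' := hab h
    set u : ℝ := Real.exp t * b / a with hu
    have hu0 : 0 < u := by positivity
    have hlog : Real.log u ≤ u * Real.exp (-1) := by
      have h1 : Real.log (u * Real.exp (-1)) ≤ u * Real.exp (-1) - 1 :=
        Real.log_le_sub_one_of_pos (by positivity)
      rw [Real.log_mul (ne_of_gt hu0) (Real.exp_ne_zero _), Real.log_exp] at h1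
      linarith
    have hlu : Real.log u = t + Real.log b - Real.log a := by
      rw [hu, Real.log_div (by positivity) (ne_of_gt h), Real.log_mul (Real.exp_ne_zero _)
        (ne_of_gt hb'), Real.log_exp]
    have hla : Real.log (a / b) = Real.log a - Real.log b :=
      Real.log_div (ne_of_gt h) (ne_of_gt hb')
    have hmul : a * Real.log u ≤ a * (u * Real.exp (-1)) :=
      mul_le_mul_of_nonneg_left hlog ha
    have hau : a * (u * Real.exp (-1)) = Real.exp (-1) * (b * Real.exp t) := by
      rw [← mul_assoc, hu]; field_simp
    rw [hlu, hau] at hmul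
    rw [hla]
    nlinarith [hmul]

/-- NWJ bound: E_p[f] - e⁻¹ E_{pX·pY}[e^f] ≤ I(X;Y) (in nats). -/
theorem nwj_bound {α β : Type*} [Fintype α] [Fintype β]
    (p : α × β → ℝ) (hp : IsPmf p) (f : α × β → ℝ) :
    (∑ z : α × β, p z * f z)
      - Real.exp (-1) * ∑ z : α × β, (∑ y, p (z.1, y)) * (∑ x, p (x, z.2)) * Real.exp (f z)
      ≤ mutualInfoNat p := by
  obtain ⟨hpos, hsum⟩ := hp
  have key : ∀ z : α × β,
      p z * f z - Real.exp (-1) * ((∑ y, p (z.1, y)) * (∑ x, p (x, z.2)) * Real.exp (f z))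
      ≤ p z * Real.log (p z / ((∑ y, p (z.1, y)) * (∑ x, p (x, z.2)))) := by
    intro z
    have hm1 : 0 ≤ ∑ y, p (z.1, y) := Finset.sum_nonneg fun y _ => hpos _
    have hm2 : 0 ≤ ∑ x, p (x, z.2) := Finset.sum_nonneg fun x _ => hpos _
    apply nwj_pointwise _ _ _ (hpos z) (by positivity)
    intro hz
    have h1 : p z ≤ ∑ y, p (z.1, y) := by
      exact Finset.single_le_sum (f := fun y => p (z.1, y)) (fun y _ => hpos _) (Finset.mem_univ z.2)
    have h2 : p z ≤ ∑ x, p (x, z.2) := by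
      exact Finset.single_le_sum (f := fun x => p (x, z.2)) (fun x _ => hpos _) (Finset.mem_univ z.1)
    have := mul_pos (lt_of_lt_of_le hz h1) (lt_of_lt_of_le hz h2)
    exact this
  calc (∑ z : α × β, p z * f z)
      - Real.exp (-1) * ∑ z : α × β, (∑ y, p (z.1, y)) * (∑ x, p (x, z.2)) * Real.exp (f z)
      = ∑ z : α × β, (p z * f z
        - Real.exp (-1) * ((∑ y, p (z.1, y)) * (∑ x, p (x, z.2)) * Real.exp (f z))) := by
        rw [Finset.sum_sub_distrib, Finset.mul_sum]
    _ ≤ ∑ z : α × β, p z * Real.log (p z / ((∑ y, p (z.1, y)) * (∑ x, p (x, z.2)))) :=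
        Finset.sum_le_sum fun z _ => key z
    _ = mutualInfoNat p := rfl
end
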